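/- In a finite bipartite market with convex differentiable item costs, let x¹ and x² be buyer demand vectors with x² ≥ x¹ componentwise, and let z¹, z² be corresponding min-cost allocations. Then for every item t, c_t(z¹_t) ≤ c_t(z²_t), and for every buyer i, the minimum marginal cost among items allocated to i satisfies r_i(z¹) ≤ r_i(z²). -/

import Mathlib

open Finset

def Feasible {B S : Type*} [Fintype S] (E : B → S → Prop)
    (x : B → ℝ) (y : B → S → ℝ) : Prop :=
  (∀ i t, 0 ≤ y i t) ∧ (∀ i t, y i t ≠ 0 → E i t) ∧ (∀ i, ∑ t, y i t = x i)

def itemLoad {B S : Type*} [Fintype B] (y : B → S → ℝ) (t : S) : ℝ :=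
  ∑ i, y i t

def totalCost {B S : Type*} [Fintype B] [Fintype S]
    (C : S → ℝ → ℝ) (y : B → S → ℝ) : ℝ :=
  ∑ t, C t (itemLoad y t)

def IsMinCost {B S : Type*} [Fintype B] [Fintype S]
    (E : B → S → Prop) (C : S → ℝ → ℝ) (x : B → ℝ) (y : B → S → ℝ) : Prop :=
  Feasible E x y ∧ ∀ y', Feasible E x y' → totalCost C y ≤ totalCost C y'

/-- Exchange lemma: at a min-cost allocation, if buyer `i` gets a positive
amount of item `t` and is adjacent to item `t'`, then the marginal cost at `t`
is at most that at `t'`. -/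
lemma exchange_ineq {B S : Type*} [Fintype B] [Fintype S]
    (E : B → S → Prop) (C c : S → ℝ → ℝ)
    (hderiv : ∀ t v, HasDerivAt (C t) (c t v) v)
    (x : B → ℝ) (z : B → S → ℝ) (hz : IsMinCost E C x z)
    (i : B) (t t' : S) (hpos : 0 < z i t) (hE' : E i t') :
    c t (itemLoad z t) ≤ c t' (itemLoad z t') := by
  classical
  by_cases htt : t = t'
  · subst htt; exact le_rfl
  obtain ⟨⟨hnn, hsupp, hrow⟩, hopt⟩ := hz
  set ℓ := itemLoad z t with hℓ
  set ℓ' := itemLoad z t' with hℓ'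
  -- the perturbed allocation
  set y : ℝ → B → S → ℝ := fun ε j s =>
    z j s + (if j = i ∧ s = t' then ε else 0) - (if j = i ∧ s = t then ε else 0)
    with hy
  have hyfeas : ∀ ε ∈ Set.Ioc (0:ℝ) (z i t), Feasible E x (y ε) := by
    intro ε hε
    refine ⟨?_, ?_, ?_⟩
    · intro j s
      by_cases h1 : j = i ∧ s = t'
      · have h2 : ¬ (j = i ∧ s = t) := by
          rintro ⟨rfl, rfl⟩
          exact htt h1.2
        simp only [hy, if_pos h1, if_neg h2, sub_zero]
        have := hnn j s
        linarith [hε.1.le]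
      · by_cases h2 : j = i ∧ s = t
        · simp only [hy, if_pos h2, if_neg h1, add_zero]
          obtain ⟨rfl, rfl⟩ := h2
          linarith [hε.2]
        · simp only [hy, if_neg h1, if_neg h2]
          simpa using hnn j s
    · intro j s hne
      by_cases h1 : j = i ∧ s = t'
      · obtain ⟨rfl, rfl⟩ := h1; exact hE'
      · by_cases h2 : j = i ∧ s = t
        · obtain ⟨rfl, rfl⟩ := h2; exact hsupp _ _ hpos.ne'
        · apply hsupp j s
          simp only [hy, if_neg h1, if_neg h2] at hne
          simpa using hne
    · intro j
      have : ∀ s, y ε j s =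
          z j s + (if j = i ∧ s = t' then ε else 0) - (if j = i ∧ s = t then ε else 0) := by
        intro s; rfl
      simp only [this]
      rw [Finset.sum_sub_distrib, Finset.sum_add_distrib]
      have e1 : ∑ s, (if j = i ∧ s = t' then ε else 0) = if j = i then ε else 0 := by
        by_cases hji : j = i
        · simp [hji]
        · simp [hji]
      have e2 : ∑ s, (if j = i ∧ s = t then ε else 0) = if j = i then ε else 0 := by
        by_cases hji : j = i
        · simp [hji]
        · simp [hji]
      rw [e1, e2, hrow j]; ring
  have hload : ∀ ε s, itemLoad (y ε) s =
      itemLoad z s + (if s = t' then ε else 0) - (if s = t then ε else 0) := by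
    intro ε s
    unfold itemLoad
    have : ∀ j, y ε j s =
        z j s + (if j = i ∧ s = t' then ε else 0) - (if j = i ∧ s = t then ε else 0) := by
      intro j; rfl
    simp only [this]
    rw [Finset.sum_sub_distrib, Finset.sum_add_distrib]
    have e1 : ∑ j, (if j = i ∧ s = t' then ε else 0) = if s = t' then ε else 0 := by
      by_cases hst : s = t'
      · simp [hst]
      · simp [hst]
    have e2 : ∑ j, (if j = i ∧ s = t then ε else 0) = if s = t then ε else 0 := by
      by_cases hst : s = t
      · simp [hst]
      · simp [hst]
    rw [e1, e2]
  have hcost : ∀ ε, totalCost C (y ε) - totalCost C z =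
      (C t' (ℓ' + ε) - C t' ℓ') + (C t (ℓ - ε) - C t ℓ) := by
    intro ε
    unfold totalCost
    rw [← Finset.sum_sub_distrib]
    have hzero : ∀ s ∈ Finset.univ, s ∉ ({t, t'} : Finset S) →
        C s (itemLoad (y ε) s) - C s (itemLoad z s) = 0 := by
      intro s _ hs
      simp only [Finset.mem_insert, Finset.mem_singleton, not_or] at hs
      rw [hload ε s, if_neg hs.2, if_neg hs.1]
      ring_nf
    rw [← Finset.sum_subset (Finset.subset_univ ({t, t'} : Finset S)) hzero]
    rw [Finset.sum_pair htt]
    rw [hload ε t, hload ε t', if_pos rfl, if_pos rfl, if_neg htt, if_neg (Ne.symm htt)]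
    simp only [hℓ, hℓ', add_zero, sub_zero]
    ring_nf
  -- g ε := cost difference as a function of ε
  set g : ℝ → ℝ := fun ε => C t' (ℓ' + ε) + C t (ℓ - ε) with hg
  have hgmin : ∀ ε ∈ Set.Ioc (0:ℝ) (z i t), g 0 ≤ g ε := by
    intro ε hε
    have h1 := hopt (y ε) (hyfeas ε hε)
    have h2 := hcost ε
    simp only [hg]
    have : (0:ℝ) ≤ (C t' (ℓ' + ε) - C t' ℓ') + (C t (ℓ - ε) - C t ℓ) := by linarith
    simp only [add_zero, sub_zero]
    linarith
  have hgd : HasDerivAt g (c t' ℓ' - c t ℓ) 0 := by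
    have h1 : HasDerivAt (fun ε : ℝ => C t' (ℓ' + ε)) (c t' ℓ' * 1) 0 := by
      have hin : HasDerivAt (fun ε : ℝ => ℓ' + ε) 1 0 := by
        simpa using (hasDerivAt_id (0:ℝ)).const_add ℓ'
      have := (hderiv t' (ℓ' + 0)).comp 0 hin
      simpa [Function.comp_def] using this
    have h2 : HasDerivAt (fun ε : ℝ => C t (ℓ - ε)) (c t ℓ * (-1)) 0 := by
      have hin : HasDerivAt (fun ε : ℝ => ℓ - ε) (-1) 0 := by
        simpa using (hasDerivAt_id (0:ℝ)).const_sub ℓ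
      have := (hderiv t (ℓ - 0)).comp 0 hin
      simpa [Function.comp_def] using this
    have := h1.add h2
    exact this.congr_deriv (by ring)
  -- one-sided derivative at a boundary minimum is nonneg
  have key : 0 ≤ c t' ℓ' - c t ℓ := by
    have htend : Filter.Tendsto (slope g 0) (nhdsWithin 0 (Set.Ioi 0))
        (nhds (c t' ℓ' - c t ℓ)) := by
      have := hasDerivAt_iff_tendsto_slope.mp hgd
      exact this.mono_left (nhdsWithin_mono 0 (fun x hx => by
        simp only [Set.mem_compl_iff, Set.mem_singleton_iff]
        exact ne_of_gt hx))
    refine ge_of_tendsto htend ?_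
    have hmem : Set.Ioc (0:ℝ) (z i t) ∈ nhdsWithin (0:ℝ) (Set.Ioi 0) :=
      Ioc_mem_nhdsGT_of_mem ⟨le_rfl, hpos⟩
    filter_upwards [hmem] with ε hε
    have h0 := hgmin ε hε
    rw [slope_def_field, sub_zero]
    exact div_nonneg (by linarith) hε.1.le
  linarith

/-- Reachability in the difference flow `z₁ - z₂`. -/
inductive Reach {B S : Type*} (z₁ z₂ : B → S → ℝ) (t₀ : S) : S → Prop
  | base : Reach z₁ z₂ t₀ t₀
  | step {t t' : S} (i : B) : Reach z₁ z₂ t₀ t → z₂ i t < z₁ i t → z₁ i t' < z₂ i t' →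
      Reach z₁ z₂ t₀ t'

/-- Monotonicity of marginal costs in the demand: if x² ≥ x¹ componentwise
then every item's marginal cost, and every buyer's minimal available marginal
cost, is no smaller at the min-cost flow for x². -/
theorem min_cost_marginal_monotone {B S : Type*} [Fintype B] [Fintype S]
    (E : B → S → Prop) [∀ i t, Decidable (E i t)]
    (C c : S → ℝ → ℝ)
    (hCconv : ∀ t, ConvexOn ℝ Set.univ (C t))
    (hderiv : ∀ t v, HasDerivAt (C t) (c t v) v)
    (hcmono : ∀ t, Monotone (c t))
    (x₁ x₂ : B → ℝ) (hx : ∀ i, x₁ i ≤ x₂ i)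
    (z₁ z₂ : B → S → ℝ)
    (hz₁ : IsMinCost E C x₁ z₁) (hz₂ : IsMinCost E C x₂ z₂)
    (hadj : ∀ i : B, (Finset.univ.filter fun t => E i t).Nonempty) :
    (∀ t, c t (itemLoad z₁ t) ≤ c t (itemLoad z₂ t)) ∧
    (∀ i : B,
      (Finset.univ.filter fun t => E i t).inf' (hadj i)
        (fun t => c t (itemLoad z₁ t)) ≤
      (Finset.univ.filter fun t => E i t).inf' (hadj i)
        (fun t => c t (itemLoad z₂ t))) := by
  classical
  have hnn₁ := hz₁.1.1
  have hnn₂ := hz₂.1.1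
  have hsupp₁ := hz₁.1.2.1
  have hsupp₂ := hz₂.1.2.1
  have hrow₁ := hz₁.1.2.2
  have hrow₂ := hz₂.1.2.2
  have part1 : ∀ t, c t (itemLoad z₁ t) ≤ c t (itemLoad z₂ t) := by
    intro t₀
    by_contra hcon
    push_neg at hcon
    -- chain inequalities along reachability
    have hchain : ∀ t, Reach z₁ z₂ t₀ t →
        c t₀ (itemLoad z₁ t₀) ≤ c t (itemLoad z₁ t) ∧
        c t (itemLoad z₂ t) ≤ c t₀ (itemLoad z₂ t₀) := by
      intro t h
      induction h with
      | base => exact ⟨le_rfl, le_rfl⟩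
      | @step t t' i _ h1 h2 ih =>
        have hz1pos : 0 < z₁ i t := lt_of_le_of_lt (hnn₂ i t) h1
        have hz2pos : 0 < z₂ i t' := lt_of_le_of_lt (hnn₁ i t') h2
        have hEt' : E i t' := hsupp₂ i t' hz2pos.ne'
        have hEt : E i t := hsupp₁ i t hz1pos.ne'
        constructor
        · exact ih.1.trans (exchange_ineq E C c hderiv x₁ z₁ hz₁ i t t' hz1pos hEt')
        · exact (exchange_ineq E C c hderiv x₂ z₂ hz₂ i t' t hz2pos hEt).trans ih.2
    -- there is a reachable item whose z₁-load is strictly smaller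
    have hload₀ : itemLoad z₂ t₀ < itemLoad z₁ t₀ := by
      by_contra h
      push_neg at h
      exact absurd (hcmono t₀ h) (not_le.mpr hcon)
    have hex : ∃ ts, Reach z₁ z₂ t₀ ts ∧ itemLoad z₁ ts < itemLoad z₂ ts := by
      by_contra hno
      push_neg at hno
      set T : Finset S := Finset.univ.filter (fun t => Reach z₁ z₂ t₀ t) with hT
      have ht₀T : t₀ ∈ T := by simp [hT, Reach.base]
      have hPOS : 0 < ∑ t ∈ T, (itemLoad z₁ t - itemLoad z₂ t) := by
        apply Finset.sum_pos'
        · intro t ht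
          simp only [hT, Finset.mem_filter] at ht
          have := hno t ht.2
          linarith
        · exact ⟨t₀, ht₀T, by linarith⟩
      have hNONPOS : ∑ t ∈ T, (itemLoad z₁ t - itemLoad z₂ t) ≤ 0 := by
        have hswap : ∑ t ∈ T, (itemLoad z₁ t - itemLoad z₂ t)
            = ∑ j, ∑ t ∈ T, (z₁ j t - z₂ j t) := by
          rw [Finset.sum_comm]
          apply Finset.sum_congr rfl
          intro t _
          unfold itemLoad
          rw [← Finset.sum_sub_distrib]
        rw [hswap]
        apply Finset.sum_nonpos
        intro j _
        by_cases hact : ∃ t ∈ T, z₂ j t < z₁ j t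
        · obtain ⟨ta, htaT, hta⟩ := hact
          simp only [hT, Finset.mem_filter] at htaT
          have hsub : ∑ t ∈ T, (z₁ j t - z₂ j t) ≤ ∑ t, (z₁ j t - z₂ j t) := by
            apply Finset.sum_le_sum_of_subset_of_nonneg (Finset.subset_univ T)
            intro s _ hsT
            by_contra hneg
            push_neg at hneg
            have : z₁ j s < z₂ j s := by linarith
            have : Reach z₁ z₂ t₀ s := Reach.step j htaT.2 hta this
            exact hsT (by simp [hT, this])
          have hfull : ∑ t, (z₁ j t - z₂ j t) = x₁ j - x₂ j := by
            rw [Finset.sum_sub_distrib, hrow₁ j, hrow₂ j]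
          have := hx j
          linarith
        · push_neg at hact
          apply Finset.sum_nonpos
          intro s hs
          have := hact s hs
          linarith
      linarith
    obtain ⟨ts, hreach, hlt⟩ := hex
    obtain ⟨hc1, hc2⟩ := hchain ts hreach
    have := hcmono ts hlt.le
    linarith
  refine ⟨part1, ?_⟩
  intro i
  obtain ⟨t, ht, heq⟩ := Finset.exists_mem_eq_inf' (hadj i)
    (fun t => c t (itemLoad z₂ t))
  rw [heq]
  exact le_trans (Finset.inf'_le _ ht) (part1 t)
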